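/- ρ is a metric on 𝒞, and the metric space (𝒞, ρ) is complete: every ρ-Cauchy sequence in 𝒞 converges with respect to ρ to an element of 𝒞. -/

import Mathlib

open MeasureTheory ProbabilityTheory Filter Set Function

noncomputable section

/-- A utility function `u` together with its first and second derivatives, satisfying
`u' > 0`, `u'' < 0` on `(0, ∞)`, `u'(c) → ∞` as `c → 0⁺` and `u'(c) → 0` as `c → ∞`. -/
structure Util where
  u : ℝ → ℝ
  u' : ℝ → ℝ
  u'' : ℝ → ℝ
  hasDeriv : ∀ x : ℝ, 0 < x → HasDerivAt u (u' x) x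
  hasDeriv2 : ∀ x : ℝ, 0 < x → HasDerivAt u' (u'' x) x
  u'_pos : ∀ x : ℝ, 0 < x → 0 < u' x
  u''_neg : ∀ x : ℝ, 0 < x → u'' x < 0
  u'_tendsto_atTop : Tendsto u' (nhdsWithin 0 (Ioi 0)) atTop
  u'_tendsto_zero : Tendsto u' atTop (nhds 0)

/-- The setup of the income fluctuation problem: `Z` is a Borel subset of `ℝ^m`, `P` is a
Feller Markov kernel on `Z`, `ν, μ` are the laws of the i.i.d. innovations `ζ, η`,
and `R, Y` are the nonnegative measurable return and income functions; `β ∈ [0,1)`. -/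
structure IFP (E1 E2 : Type) [MeasurableSpace E1] [MeasurableSpace E2] where
  m : ℕ
  Z : Set (Fin m → ℝ)
  hZ : MeasurableSet Z
  P : Kernel Z Z
  hP : IsMarkovKernel P
  ν : Measure E1
  μ : Measure E2
  hν : IsProbabilityMeasure ν
  hμ : IsProbabilityMeasure μ
  R : Z → E1 → ℝ
  Y : Z → E2 → ℝ
  R_nonneg : ∀ z ζ, 0 ≤ R z ζ
  Y_nonneg : ∀ z η, 0 ≤ Y z η
  R_meas : Measurable fun w : Z × E1 => R w.1 w.2
  Y_meas : Measurable fun w : Z × E2 => Y w.1 w.2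
  β : ℝ
  β_nonneg : 0 ≤ β
  β_lt_one : β < 1
  feller : ∀ h : Z → ℝ, Continuous h → (∃ M, ∀ z, |h z| ≤ M) →
    Continuous fun z : Z => ∫ z', h z' ∂(P z)

variable {E1 E2 : Type} [MeasurableSpace E1] [MeasurableSpace E2]

instance (S : IFP E1 E2) : IsMarkovKernel S.P := S.hP
instance (S : IFP E1 E2) : IsProbabilityMeasure S.ν := S.hν
instance (S : IFP E1 E2) : IsProbabilityMeasure S.μ := S.hμ

namespace IFP

/-- The joint law of `(ẑ, ζ̂, η̂)` over one step, given the current exogenous state `z`. -/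
def Em (S : IFP E1 E2) (z : S.Z) : Measure (S.Z × E1 × E2) := (S.P z).prod (S.ν.prod S.μ)

/-- `E_z[R̂]`. -/
def ER (S : IFP E1 E2) (z : S.Z) : ℝ := ∫ w, S.R w.1 w.2.1 ∂(S.Em z)

/-- `E_z[Ŷ]`. -/
def EY1 (S : IFP E1 E2) (z : S.Z) : ℝ := ∫ w, S.Y w.1 w.2.2 ∂(S.Em z)

/-- `E_z[R̂ ⬝ u'(Ŷ)]`. -/
def ERuY (S : IFP E1 E2) (u' : ℝ → ℝ) (z : S.Z) : ℝ :=
  ∫ w, S.R w.1 w.2.1 * u' (S.Y w.1 w.2.2) ∂(S.Em z)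

/-- `E_z[u'(Ŷ)]`. -/
def EuY (S : IFP E1 E2) (u' : ℝ → ℝ) (z : S.Z) : ℝ := ∫ w, u' (S.Y w.1 w.2.2) ∂(S.Em z)

/-- `E_z[R_1 ⋯ R_n]`, computed via the Markov property. -/
def ERprod (S : IFP E1 E2) : ℕ → S.Z → ℝ
  | 0 => fun _ => 1
  | n + 1 => fun z => ∫ w, S.R w.1 w.2.1 * ERprod S n w.1 ∂(S.Em z)

/-- Iteration of the exogenous kernel `P` on functions. -/
def iterP (S : IFP E1 E2) : ℕ → (S.Z → ℝ) → S.Z → ℝ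
  | 0, f => f
  | n + 1, f => fun z => ∫ z', iterP S n f z' ∂(S.P z)

/-- `E_z[Y_t]` for `t ≥ 1`. -/
def EzY (S : IFP E1 E2) (t : ℕ) : S.Z → ℝ := iterP S (t - 1) S.EY1

/-- Assumption (I): `β^n ⬝ sup_z E_z[R_1 ⋯ R_n] < 1` for some `n ≥ 1`. -/
def AssumptionI (S : IFP E1 E2) : Prop :=
  ∃ n : ℕ, 0 < n ∧ BddAbove (range (ERprod S n)) ∧ S.β ^ n * sSup (range (ERprod S n)) < 1

/-- Assumption (II): `Σ_{t≥1} β^t E_z[Y_t] < ∞` for every `z`. -/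
def AssumptionII (S : IFP E1 E2) : Prop :=
  ∀ z : S.Z, Summable fun t : ℕ => S.β ^ (t + 1) * EzY S (t + 1) z

/-- Assumption (III): `sup_z E_z[R̂] < ∞`, `sup_z E_z[u'(Ŷ)] < ∞`, `sup_z E_z[R̂ u'(Ŷ)] < ∞`. -/
def AssumptionIII (S : IFP E1 E2) (u' : ℝ → ℝ) : Prop :=
  BddAbove (range S.ER) ∧ BddAbove (range (S.EuY u')) ∧ BddAbove (range (S.ERuY u'))

/-- Assumption (IV): continuity in `z` of `R`, `Y`, `E_z[R̂]` and `E_z[R̂ u'(Ŷ)]`. -/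
def AssumptionIV (S : IFP E1 E2) (u' : ℝ → ℝ) : Prop :=
  (∀ ζ, Continuous fun z : S.Z => S.R z ζ) ∧ (∀ η, Continuous fun z : S.Z => S.Y z η) ∧
    Continuous S.ER ∧ Continuous (S.ERuY u')

/-- Assumption (V), for a given `α ∈ (0,1)`:
`β E_z[R̂ u'(R̂(1-α)a)] ≤ u'(a)` on `S₀`, and `(1-α)^n sup_z E_z[R_1⋯R_n] < 1` for some `n`. -/
def AssumptionV (S : IFP E1 E2) (u' : ℝ → ℝ) (α : ℝ) : Prop :=
  0 < α ∧ α < 1 ∧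
    (∀ a : ℝ, 0 < a → ∀ z : S.Z,
      S.β * ∫ w, S.R w.1 w.2.1 * u' (S.R w.1 w.2.1 * (1 - α) * a) ∂(S.Em z) ≤ u' a) ∧
    ∃ n : ℕ, 0 < n ∧ BddAbove (range (ERprod S n)) ∧
      (1 - α) ^ n * sSup (range (ERprod S n)) < 1

/-- Assumption (VI): `sup_{t ≥ 1} E_z[Y_t] < ∞` for every `z`. -/
def AssumptionVI (S : IFP E1 E2) : Prop := ∀ z : S.Z, BddAbove (range fun t : ℕ => EzY S (t + 1) z)

/-- `t`-step transition probabilities of the exogenous kernel `P`. -/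
def Pt (S : IFP E1 E2) : ℕ → S.Z → Measure S.Z
  | 0 => fun z => Measure.dirac z
  | t + 1 => fun z => (Pt S t z).bind fun z' => S.P z'

/-- Assumption (VII): `P` is bounded in probability (tightness of `{P^t(z,⬝)}ₜ`). -/
def AssumptionVII (S : IFP E1 E2) : Prop :=
  ∀ z : S.Z, ∀ ε : ENNReal, 0 < ε → ∃ K : Set S.Z, IsCompact K ∧ ∀ t, Pt S t z Kᶜ ≤ ε

/-- The candidate class `𝒞`: continuous on `S₀`, increasing in assets, `0 < c(a,z) ≤ a`,
and `u' ∘ c` within bounded distance of `u'`. -/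
def MemC (S : IFP E1 E2) (u' : ℝ → ℝ) (c : ℝ → S.Z → ℝ) : Prop :=
  ContinuousOn (fun p : ℝ × S.Z => c p.1 p.2) {p : ℝ × S.Z | 0 < p.1} ∧
    (∀ z : S.Z, ∀ a b : ℝ, 0 < a → a ≤ b → c a z ≤ c b z) ∧
    (∀ (a : ℝ) (z : S.Z), 0 < a → 0 < c a z ∧ c a z ≤ a) ∧
    ∃ M : ℝ, ∀ (a : ℝ) (z : S.Z), 0 < a → |u' (c a z) - u' a| ≤ M

/-- The metric `ρ(c,d) = sup_{(a,z) ∈ S₀} |u'(c(a,z)) - u'(d(a,z))|`. -/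
def rho (S : IFP E1 E2) (u' : ℝ → ℝ) (c d : ℝ → S.Z → ℝ) : ℝ :=
  sSup ((fun p : ℝ × S.Z => |u' (c p.1 p.2) - u' (d p.1 p.2)|) '' {p : ℝ × S.Z | 0 < p.1})

/-- `β ⬝ E_z[ R̂ ⬝ u'(c(R̂ s + Ŷ, ẑ)) ]`, where `s` is the amount saved. -/
def EulerExp (S : IFP E1 E2) (u' : ℝ → ℝ) (c : ℝ → S.Z → ℝ) (s : ℝ) (z : S.Z) : ℝ :=
  S.β * ∫ w, S.R w.1 w.2.1 * u' (c (S.R w.1 w.2.1 * s + S.Y w.1 w.2.2) w.1) ∂(S.Em z)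

/-- `Tc` is a version of the Coleman operator applied to `c`: for every `(a,z) ∈ S₀`,
`Tc(a,z)` is the `ξ ∈ (0,a]` solving `u'(ξ) = max{β E_z[R̂ u'(c(R̂(a-ξ)+Ŷ,ẑ))], u'(a)}`. -/
def ColemanEq (S : IFP E1 E2) (u' : ℝ → ℝ) (c Tc : ℝ → S.Z → ℝ) : Prop :=
  ∀ (a : ℝ) (z : S.Z), 0 < a →
    0 < Tc a z ∧ Tc a z ≤ a ∧ u' (Tc a z) = max (EulerExp S u' c (a - Tc a z) z) (u' a)

/-- `c` is a fixed point of the Coleman operator on `S₀`. -/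
def FixedPointEq (S : IFP E1 E2) (u' : ℝ → ℝ) (c : ℝ → S.Z → ℝ) : Prop :=
  ∀ (a : ℝ) (z : S.Z), 0 < a → u' (c a z) = max (EulerExp S u' c (a - c a z) z) (u' a)

/-- A feasible policy: Borel measurable on `S₀`, with `0 ≤ c(a,z) ≤ a`. -/
def Feasible (S : IFP E1 E2) (c : ℝ → S.Z → ℝ) : Prop :=
  Measurable ({p : ℝ × S.Z | 0 < p.1}.restrict fun p : ℝ × S.Z => c p.1 p.2) ∧
    ∀ (a : ℝ) (z : S.Z), 0 < a → 0 ≤ c a z ∧ c a z ≤ a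

/-- `E_{a,z}[f(a_t, z_t)]` along the asset path generated by the policy `c`,
computed by iterating the one-step transition. -/
def EpathC (S : IFP E1 E2) (c : ℝ → S.Z → ℝ) : ℕ → (ℝ → S.Z → ℝ) → ℝ → S.Z → ℝ
  | 0, f => f
  | t + 1, f => fun a z =>
      ∫ w, EpathC S c t f (S.R w.1 w.2.1 * (a - c a z) + S.Y w.1 w.2.2) w.1 ∂(S.Em z)

/-- The lifetime value `V_c(a,z) = E_{a,z} Σ_{t≥0} β^t u(c(a_t,z_t)) ∈ {-∞} ∪ ℝ`,
realized as the limit (`liminf`) of the partial sums in `EReal`. -/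
def V (S : IFP E1 E2) (u : ℝ → ℝ) (c : ℝ → S.Z → ℝ) (a : ℝ) (z : S.Z) : EReal :=
  liminf (fun T : ℕ =>
    ((∑ t ∈ Finset.range T, S.β ^ t * EpathC S c t (fun a' z' => u (c a' z')) a z : ℝ) : EReal))
    atTop

/-- `c` is an optimal policy: it is feasible and dominates every feasible policy on `S₀`. -/
def Optimal (S : IFP E1 E2) (u : ℝ → ℝ) (c : ℝ → S.Z → ℝ) : Prop :=
  Feasible S c ∧ ∀ d : ℝ → S.Z → ℝ, Feasible S d →
    ∀ (a : ℝ) (z : S.Z), 0 < a → V S u d a z ≤ V S u c a z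

/-- The first-order optimality conditions. -/
def FOC (S : IFP E1 E2) (u' : ℝ → ℝ) (c : ℝ → S.Z → ℝ) : Prop :=
  ∀ (a : ℝ) (z : S.Z), 0 < a →
    EulerExp S u' c (a - c a z) z ≤ u' (c a z) ∧
      (c a z < a → u' (c a z) = EulerExp S u' c (a - c a z) z)

/-- The transversality condition: `β^t E_{a,z}[u'(c(a_t,z_t)) a_t] → 0`. -/
def Transversality (S : IFP E1 E2) (u' : ℝ → ℝ) (c : ℝ → S.Z → ℝ) : Prop :=
  ∀ (a : ℝ) (z : S.Z), 0 < a →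
    Tendsto (fun t : ℕ => S.β ^ t * EpathC S c t (fun a' z' => u' (c a' z') * a') a z)
      atTop (nhds 0)

/-- `E_{a,z}[ã_t]` along the maximal asset path `ã_{t+1} = R_{t+1} ã_t + Y_{t+1}`. -/
def EAmax (S : IFP E1 E2) : ℕ → ℝ → S.Z → ℝ
  | 0 => fun a _ => a
  | t + 1 => fun a z => ∫ w, EAmax S t (S.R w.1 w.2.1 * a + S.Y w.1 w.2.2) w.1 ∂(S.Em z)

/-- The stochastic kernel `Q` of the state process `(a_t, z_t)` controlled by the policy `c`. -/
def Qmeas (S : IFP E1 E2) (c : ℝ → S.Z → ℝ) (s : ℝ × S.Z) : Measure (ℝ × S.Z) :=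
  (S.Em s.2).map fun w => (S.R w.1 w.2.1 * (s.1 - c s.1 s.2) + S.Y w.1 w.2.2, w.1)

/-- `t`-step transition probabilities of `Q`. -/
def Qiter (S : IFP E1 E2) (c : ℝ → S.Z → ℝ) : ℕ → ℝ × S.Z → Measure (ℝ × S.Z)
  | 0 => fun s => Measure.dirac s
  | t + 1 => fun s => (Qiter S c t s).bind (Qmeas S c)

/-- `ψ` is a stationary probability distribution of `Q`, supported on `S = [0,∞) × Z`. -/
def Stationary (S : IFP E1 E2) (c : ℝ → S.Z → ℝ) (ψ : Measure (ℝ × S.Z)) : Prop :=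
  IsProbabilityMeasure ψ ∧ ψ {p : ℝ × S.Z | p.1 < 0} = 0 ∧ ψ.bind (Qmeas S c) = ψ

/-- `u'inv` is the inverse of `u'` as a bijection of `(0,∞)`. -/
def IsUInv (u' u'inv : ℝ → ℝ) : Prop :=
  (∀ x : ℝ, 0 < x → u'inv (u' x) = x) ∧ ∀ y : ℝ, 0 < y → 0 < u'inv y ∧ u' (u'inv y) = y

/-- Assumption (VIII): for every `z` and every `c ∈ 𝒞` concave in assets, the map
`s ↦ (u')⁻¹(β E_z[R̂ u'(c(R̂ s + Ŷ, ẑ))])` is concave on `[0, ∞)`. -/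
def AssumptionVIII (S : IFP E1 E2) (u' u'inv : ℝ → ℝ) : Prop :=
  ∀ (z : S.Z) (c : ℝ → S.Z → ℝ), MemC S u' c →
    (∀ z' : S.Z, ConcaveOn ℝ (Ioi 0) fun a => c a z') →
    ConcaveOn ℝ (Ici 0) fun s => u'inv (EulerExp S u' c s z)

/-- Assumption (IX): density representations `p(z'|z)` (w.r.t. `ϑ`) for `P` and
`f_L(y|z)` (w.r.t. Lebesgue) for the income, positive on suitable sets. -/
def AssumptionIX (S : IFP E1 E2) (ϑ : Measure S.Z) (pdens : S.Z → S.Z → ℝ) (fL : ℝ → S.Z → ℝ)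
    (C : Set S.Z) : Prop :=
  ϑ ≠ 0 ∧
    (∀ (z : S.Z) (A : Set S.Z), MeasurableSet A →
      S.P z A = ∫⁻ z' in A, ENNReal.ofReal (pdens z' z) ∂ϑ) ∧
    (∀ (z : S.Z) (B : Set ℝ), MeasurableSet B →
      S.μ.map (fun η => S.Y z η) B = ∫⁻ y in B, ENNReal.ofReal (fL y z) ∂(volume : Measure ℝ)) ∧
    IsCompact C ∧ (interior C).Nonempty ∧
    (∀ z ∈ C, ∀ Uo : Set S.Z, IsOpen Uo → z ∈ Uo → 0 < ϑ Uo) ∧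
    (∀ z' ∈ C, ∀ z : S.Z, 0 < pdens z' z) ∧
    (∀ z' : S.Z, Continuous fun z : S.Z => pdens z' z) ∧
    ∃ δY : ℝ, 0 < δY ∧ ∀ y ∈ Ioo (0 : ℝ) δY, ∀ z ∈ C, 0 < fL y z

/-- Assumption (X): a density `f_C(r|z)` for returns, positive near `0` on `C`, and the
geometric drift condition `E_z[Y_2] ≤ q E_z[Y_1] + q'`. -/
def AssumptionX (S : IFP E1 E2) (fC : ℝ → S.Z → ℝ) (C : Set S.Z) : Prop :=
  (∀ (z : S.Z) (B : Set ℝ), MeasurableSet B →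
    S.ν.map (fun ζ => S.R z ζ) B = ∫⁻ r in B, ENNReal.ofReal (fC r z) ∂(volume : Measure ℝ)) ∧
    (∃ δR : ℝ, 0 < δR ∧ ∀ r ∈ Ioo (0 : ℝ) δR, ∀ z ∈ C, 0 < fC r z) ∧
    ∃ q q' : ℝ, 0 ≤ q ∧ q < 1 ∧ 0 ≤ q' ∧ ∀ z : S.Z, EzY S 2 z ≤ q * EzY S 1 z + q'

end IFP


namespace S3Aux
variable (U : Util)

lemma u'_contAt {x : ℝ} (hx : 0 < x) : ContinuousAt U.u' x :=
  (U.hasDeriv2 x hx).differentiableAt.continuousAt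

lemma u'_contOn : ContinuousOn U.u' (Ioi 0) :=
  fun x hx => (u'_contAt U hx).continuousWithinAt

lemma u'_strictAnti : StrictAntiOn U.u' (Ioi 0) := by
  apply strictAntiOn_of_deriv_neg (convex_Ioi 0) (u'_contOn U)
  intro x hx
  rw [interior_Ioi] at hx
  rw [(U.hasDeriv2 x hx).deriv]
  exact U.u''_neg x hx

noncomputable def psi (t : ℝ) : ℝ := -Real.log (U.u' (Real.exp t))

lemma psi_strictMono : StrictMono (psi U) := by
  intro s t hst
  have h1 : U.u' (Real.exp t) < U.u' (Real.exp s) :=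
    u'_strictAnti U (Real.exp_pos s) (Real.exp_pos t) (Real.exp_lt_exp.2 hst)
  have h2 : Real.log (U.u' (Real.exp t)) < Real.log (U.u' (Real.exp s)) :=
    Real.log_lt_log (U.u'_pos _ (Real.exp_pos t)) h1
  simpa [psi] using neg_lt_neg h2

lemma psi_continuous : Continuous (psi U) := by
  rw [continuous_iff_continuousAt]
  intro t
  have h0 : ContinuousAt U.u' (Real.exp t) := u'_contAt U (Real.exp_pos t)
  have h2 : ContinuousAt Real.log (U.u' (Real.exp t)) :=
    Real.continuousAt_log (ne_of_gt (U.u'_pos _ (Real.exp_pos t)))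
  have h3 : ContinuousAt (fun t => Real.log (U.u' (Real.exp t))) t :=
    (h2.comp h0).comp Real.continuous_exp.continuousAt
  exact h3.neg

lemma psi_atTop : Tendsto (psi U) atTop atTop := by
  have h1 : Tendsto (fun t => U.u' (Real.exp t)) atTop (nhdsWithin 0 (Ioi 0)) := by
    apply tendsto_nhdsWithin_of_tendsto_nhds_of_eventually_within
    · exact U.u'_tendsto_zero.comp Real.tendsto_exp_atTop
    · exact Eventually.of_forall fun t => U.u'_pos _ (Real.exp_pos t)
  have h2 := Real.tendsto_log_nhdsGT_zero.comp h1
  have : Tendsto (fun t => Real.log (U.u' (Real.exp t))) atTop atBot := h2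
  exact tendsto_neg_atTop_iff.mpr this
  
lemma psi_atBot : Tendsto (psi U) atBot atBot := by
  have h1 : Tendsto (fun t : ℝ => Real.exp t) atBot (nhdsWithin 0 (Ioi 0)) := by
    apply tendsto_nhdsWithin_of_tendsto_nhds_of_eventually_within
    · exact Real.tendsto_exp_atBot
    · exact Eventually.of_forall fun t => Real.exp_pos t
  have h2 := U.u'_tendsto_atTop.comp h1
  have h3 : Tendsto (fun t => Real.log (U.u' (Real.exp t))) atBot atTop :=
    Real.tendsto_log_atTop.comp h2
  exact tendsto_neg_atBot_iff.mpr h3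

lemma psi_surj : Surjective (psi U) :=
  Continuous.surjective (psi_continuous U) (psi_atTop U) (psi_atBot U)

noncomputable def Phi : ℝ ≃o ℝ := (psi_strictMono U).orderIsoOfSurjective _ (psi_surj U)

noncomputable def uinv (y : ℝ) : ℝ := Real.exp ((Phi U).symm (-Real.log y))

lemma Phi_apply (t : ℝ) : Phi U t = psi U t := rfl

lemma uinv_pos (y : ℝ) : 0 < uinv U y := Real.exp_pos _

lemma uinv_u' {x : ℝ} (hx : 0 < x) : uinv U (U.u' x) = x := by
  have h1 : Phi U (Real.log x) = -Real.log (U.u' x) := by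
    rw [Phi_apply]; unfold psi; rw [Real.exp_log hx]
  have h2 : (Phi U).symm (-Real.log (U.u' x)) = Real.log x := by
    rw [← h1]; exact (Phi U).symm_apply_apply _
  unfold uinv; rw [h2, Real.exp_log hx]

lemma u'_uinv {y : ℝ} (hy : 0 < y) : U.u' (uinv U y) = y := by
  have h1 : Phi U ((Phi U).symm (-Real.log y)) = -Real.log y := (Phi U).apply_symm_apply _
  rw [Phi_apply] at h1
  unfold psi at h1
  have h2 : Real.log (U.u' (uinv U y)) = Real.log y := by
    have := neg_injective h1
    simpa [uinv] using this
  have hp : 0 < U.u' (uinv U y) := U.u'_pos _ (uinv_pos U y)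
  calc U.u' (uinv U y) = Real.exp (Real.log (U.u' (uinv U y))) := (Real.exp_log hp).symm
    _ = Real.exp (Real.log y) := by rw [h2]
    _ = y := Real.exp_log hy

lemma uinv_anti {y1 y2 : ℝ} (h1 : 0 < y1) (hle : y1 ≤ y2) : uinv U y2 ≤ uinv U y1 := by
  have : -Real.log y2 ≤ -Real.log y1 := neg_le_neg (Real.log_le_log h1 hle)
  exact Real.exp_le_exp.mpr ((Phi U).symm.monotone this)

lemma uinv_contAt {y : ℝ} (hy : 0 < y) : ContinuousAt (uinv U) y := by
  have h1 : ContinuousAt (fun y : ℝ => -Real.log y) y :=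
    (Real.continuousAt_log (ne_of_gt hy)).neg
  have h2 : Continuous ((Phi U).symm : ℝ → ℝ) :=
    ((Phi U).toHomeomorph).symm.continuous
  exact (Real.continuous_exp.continuousAt.comp
    (h2.continuousAt.comp h1))

end S3Aux


/-- `ρ` is a metric on `𝒞` (nonnegative, zero exactly on the diagonal,
symmetric, satisfying the triangle inequality), and `(𝒞, ρ)` is complete: every `ρ`-Cauchy
sequence in `𝒞` converges in `ρ` to an element of `𝒞`. -/
theorem statement_3 {E1 E2 : Type} [MeasurableSpace E1] [MeasurableSpace E2]
    (S : IFP E1 E2) (U : Util) :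
    (∀ c d : ℝ → S.Z → ℝ, S.MemC U.u' c → S.MemC U.u' d → 0 ≤ S.rho U.u' c d) ∧
    (∀ c : ℝ → S.Z → ℝ, S.MemC U.u' c → S.rho U.u' c c = 0) ∧
    (∀ c d : ℝ → S.Z → ℝ, S.MemC U.u' c → S.MemC U.u' d →
      S.rho U.u' c d = 0 → ∀ (a : ℝ) (z : S.Z), 0 < a → c a z = d a z) ∧
    (∀ c d : ℝ → S.Z → ℝ, S.MemC U.u' c → S.MemC U.u' d →
      S.rho U.u' c d = S.rho U.u' d c) ∧
    (∀ c d e : ℝ → S.Z → ℝ, S.MemC U.u' c → S.MemC U.u' d → S.MemC U.u' e →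
      S.rho U.u' c e ≤ S.rho U.u' c d + S.rho U.u' d e) ∧
    (∀ f : ℕ → ℝ → S.Z → ℝ, (∀ n, S.MemC U.u' (f n)) →
      (∀ ε : ℝ, 0 < ε → ∃ N : ℕ, ∀ p q : ℕ, N ≤ p → N ≤ q → S.rho U.u' (f p) (f q) < ε) →
      ∃ g : ℝ → S.Z → ℝ, S.MemC U.u' g ∧
        Filter.Tendsto (fun n => S.rho U.u' (f n) g) Filter.atTop (nhds 0)) := by
  classical
  have hbdd : ∀ c d : ℝ → S.Z → ℝ, S.MemC U.u' c → S.MemC U.u' d →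
      BddAbove ((fun p : ℝ × S.Z => |U.u' (c p.1 p.2) - U.u' (d p.1 p.2)|) ''
        {p : ℝ × S.Z | 0 < p.1}) := by
    rintro c d hc hd
    obtain ⟨Mc, hMc⟩ := hc.2.2.2
    obtain ⟨Md, hMd⟩ := hd.2.2.2
    refine ⟨Mc + Md, ?_⟩
    rintro x ⟨p, hp, rfl⟩
    calc |U.u' (c p.1 p.2) - U.u' (d p.1 p.2)|
        ≤ |U.u' (c p.1 p.2) - U.u' p.1| + |U.u' p.1 - U.u' (d p.1 p.2)| := abs_sub_le _ _ _
      _ ≤ Mc + Md := add_le_add (hMc p.1 p.2 hp)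
          (by rw [abs_sub_comm]; exact hMd p.1 p.2 hp)
  have hle : ∀ c d : ℝ → S.Z → ℝ, S.MemC U.u' c → S.MemC U.u' d → ∀ (a : ℝ) (z : S.Z), 0 < a →
      |U.u' (c a z) - U.u' (d a z)| ≤ S.rho U.u' c d := by
    intro c d hc hd a z ha
    exact le_csSup (hbdd c d hc hd) ⟨(a, z), ha, rfl⟩
  have hnonneg : ∀ c d : ℝ → S.Z → ℝ, 0 ≤ S.rho U.u' c d := by
    intro c d
    exact Real.sSup_nonneg (by rintro x ⟨p, hp, rfl⟩; exact abs_nonneg _)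
  refine ⟨fun c d _ _ => hnonneg c d, ?_, ?_, ?_, ?_, ?_⟩
  · intro c hc
    refine le_antisymm (Real.sSup_le ?_ le_rfl) (hnonneg c c)
    rintro x ⟨p, hp, rfl⟩
    simp
  · intro c d hc hd h0 a z ha
    have h1 := hle c d hc hd a z ha
    rw [h0] at h1
    have h2 : U.u' (c a z) = U.u' (d a z) := by
      have h3 := abs_nonneg (U.u' (c a z) - U.u' (d a z))
      have : |U.u' (c a z) - U.u' (d a z)| = 0 := le_antisymm h1 h3
      have := abs_eq_zero.mp this
      linarith [sub_eq_zero.mp this]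
    exact (S3Aux.u'_strictAnti U).injOn (mem_Ioi.2 (hc.2.2.1 a z ha).1)
      (mem_Ioi.2 (hd.2.2.1 a z ha).1) h2
  · intro c d _ _
    unfold IFP.rho
    congr 1
    apply image_congr
    intro p _
    exact abs_sub_comm _ _
  · intro c d e hc hd he
    apply Real.sSup_le
    · rintro x ⟨p, hp, rfl⟩
      calc |U.u' (c p.1 p.2) - U.u' (e p.1 p.2)|
          ≤ |U.u' (c p.1 p.2) - U.u' (d p.1 p.2)| + |U.u' (d p.1 p.2) - U.u' (e p.1 p.2)| :=
            abs_sub_le _ _ _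
        _ ≤ S.rho U.u' c d + S.rho U.u' d e :=
            add_le_add (hle c d hc hd p.1 p.2 hp) (hle d e hd he p.1 p.2 hp)
    · exact add_nonneg (hnonneg c d) (hnonneg d e)
  · intro f hf hC
    have key : ∀ p q : ℕ, ∀ (a : ℝ) (z : S.Z), 0 < a →
        |U.u' (f p a z) - U.u' (f q a z)| ≤ S.rho U.u' (f p) (f q) :=
      fun p q a z ha => hle (f p) (f q) (hf p) (hf q) a z ha
    have cauchy : ∀ (a : ℝ) (z : S.Z), 0 < a → CauchySeq fun n => U.u' (f n a z) := by
      intro a z ha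
      rw [Metric.cauchySeq_iff]
      intro ε hε
      obtain ⟨N, hN⟩ := hC ε hε
      exact ⟨N, fun p hp q hq => lt_of_le_of_lt
        (by rw [Real.dist_eq]; exact key p q a z ha) (hN p q hp hq)⟩
    set h : ℝ × S.Z → ℝ := fun p => limUnder atTop fun n => U.u' (f n p.1 p.2) with hh
    have hlim : ∀ (a : ℝ) (z : S.Z), 0 < a →
        Tendsto (fun n => U.u' (f n a z)) atTop (nhds (h (a, z))) :=
      fun a z ha => (cauchy a z ha).tendsto_limUnder
    have unif : ∀ ε : ℝ, 0 < ε → ∃ N, ∀ n, N ≤ n → ∀ (a : ℝ) (z : S.Z), 0 < a →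
        |U.u' (f n a z) - h (a, z)| ≤ ε := by
      intro ε hε
      obtain ⟨N, hN⟩ := hC ε hε
      refine ⟨N, fun n hn a z ha => ?_⟩
      have h1 : Tendsto (fun q => |U.u' (f n a z) - U.u' (f q a z)|) atTop
          (nhds |U.u' (f n a z) - h (a, z)|) :=
        (tendsto_const_nhds.sub (hlim a z ha)).abs
      apply le_of_tendsto h1
      filter_upwards [eventually_ge_atTop N] with q hq
      exact le_of_lt (lt_of_le_of_lt (key n q a z ha) (hN n q hn hq))
    have hge : ∀ (a : ℝ) (z : S.Z), 0 < a → U.u' a ≤ h (a, z) := by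
      intro a z ha
      apply ge_of_tendsto (hlim a z ha)
      filter_upwards with n
      obtain ⟨hp0, hle'⟩ := (hf n).2.2.1 a z ha
      exact (S3Aux.u'_strictAnti U).antitoneOn (mem_Ioi.2 hp0) (mem_Ioi.2 ha) hle'
    have hposh : ∀ (a : ℝ) (z : S.Z), 0 < a → 0 < h (a, z) :=
      fun a z ha => lt_of_lt_of_le (U.u'_pos a ha) (hge a z ha)
    have hmono : ∀ (z : S.Z) (a b : ℝ), 0 < a → a ≤ b → h (b, z) ≤ h (a, z) := by
      intro z a b ha hab
      have hb : 0 < b := lt_of_lt_of_le ha hab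
      apply le_of_tendsto_of_tendsto' (hlim b z hb) (hlim a z ha)
      intro n
      exact (S3Aux.u'_strictAnti U).antitoneOn (mem_Ioi.2 ((hf n).2.2.1 a z ha).1)
        (mem_Ioi.2 ((hf n).2.2.1 b z hb).1) ((hf n).2.1 z a b ha hab)
    have hconth : ContinuousOn h {p : ℝ × S.Z | 0 < p.1} := by
      have htu : TendstoUniformlyOn (fun n p => U.u' (f n p.1 p.2)) h atTop
          {p : ℝ × S.Z | 0 < p.1} := by
        rw [Metric.tendstoUniformlyOn_iff]
        intro ε hε
        obtain ⟨N, hN⟩ := unif (ε/2) (half_pos hε)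
        filter_upwards [eventually_ge_atTop N] with n hn
        intro p hp
        rw [Real.dist_eq, abs_sub_comm]
        exact lt_of_le_of_lt (hN n hn p.1 p.2 hp) (half_lt_self hε)
      apply htu.continuousOn
      refine Frequently.of_forall fun n => ?_
      apply ContinuousOn.comp (S3Aux.u'_contOn U) (hf n).1
      intro p hp
      exact mem_Ioi.2 ((hf n).2.2.1 p.1 p.2 hp).1
    refine ⟨fun a z => S3Aux.uinv U (h (a, z)), ⟨?_, ?_, ?_, ?_⟩, ?_⟩
    · intro p hp
      exact (S3Aux.uinv_contAt U (hposh p.1 p.2 hp)).comp_continuousWithinAt (hconth p hp)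
    · intro z a b ha hab
      exact S3Aux.uinv_anti U (hposh b z (lt_of_lt_of_le ha hab)) (hmono z a b ha hab)
    · intro a z ha
      refine ⟨S3Aux.uinv_pos U _, ?_⟩
      by_contra hcon
      push_neg at hcon
      have h1 : U.u' (S3Aux.uinv U (h (a, z))) < U.u' a :=
        S3Aux.u'_strictAnti U (mem_Ioi.2 ha) (mem_Ioi.2 (S3Aux.uinv_pos U _)) hcon
      rw [S3Aux.u'_uinv U (hposh a z ha)] at h1
      exact absurd (hge a z ha) (not_le.2 h1)
    · obtain ⟨N, hN⟩ := unif 1 one_pos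
      obtain ⟨MN, hMN⟩ := (hf N).2.2.2
      refine ⟨1 + MN, fun a z ha => ?_⟩
      rw [S3Aux.u'_uinv U (hposh a z ha)]
      calc |h (a, z) - U.u' a|
          ≤ |h (a, z) - U.u' (f N a z)| + |U.u' (f N a z) - U.u' a| := abs_sub_le _ _ _
        _ ≤ 1 + MN := add_le_add (by rw [abs_sub_comm]; exact hN N le_rfl a z ha) (hMN a z ha)
    · rw [Metric.tendsto_atTop]
      intro ε hε
      obtain ⟨N, hN⟩ := unif (ε/2) (half_pos hε)
      refine ⟨N, fun n hn => ?_⟩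
      rw [Real.dist_eq, sub_zero, abs_of_nonneg (hnonneg _ _)]
      apply lt_of_le_of_lt _ (half_lt_self hε)
      apply Real.sSup_le
      · rintro x ⟨p, hp, rfl⟩
        show |U.u' (f n p.1 p.2) - U.u' (S3Aux.uinv U (h (p.1, p.2)))| ≤ ε / 2
        rw [S3Aux.u'_uinv U (hposh p.1 p.2 hp)]
        exact hN n hn p.1 p.2 hp
      · linarith
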